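/- Let C be a [d+3, 4, d] MDS code over F_q with d ≥ 3. Then the b=3 weight enumerator satisfies A^3(0) = 1, A^3(w) = 0 for 1 ≤ w ≤ d+1, A^3(d+2) = (d+3)(q-1), and A^3(d+3) = q^4 - (d+3)q + d + 2; in particular these values sum to q^4. -/

import Mathlib

/-- The cyclic `b`-weight of `x : ZMod n → F`. -/
noncomputable def wtb {F : Type*} [Zero F] {n : ℕ} (b : ℕ) (x : ZMod n → F) : ℕ :=
  Nat.card {i : ZMod n // ∃ j < b, x (i + (j : ZMod n)) ≠ 0}

namespace MDSAux

open Finset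

variable {F : Type*} [Field F] [Fintype F] [DecidableEq F]

lemma shift_ne {n : ℕ} (h6 : 6 ≤ n) (i : ZMod n) {a b : ℕ} (hab : a < b) (hb : b ≤ 5) :
    i + (a : ZMod n) ≠ i + (b : ZMod n) := by
  intro h
  have h' : ((a : ℕ) : ZMod n) = (b : ℕ) := add_left_cancel h
  rw [ZMod.natCast_eq_natCast_iff] at h'
  have h'' : a % n = b % n := h'
  rw [Nat.mod_eq_of_lt (by omega), Nat.mod_eq_of_lt (by omega)] at h''
  omega

/-- The window-of-three-zeros predicate. -/
def Win {n : ℕ} (c : ZMod n → F) (i : ZMod n) : Prop :=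
  c i = 0 ∧ c (i + 1) = 0 ∧ c (i + 2) = 0

instance {n : ℕ} (c : ZMod n → F) : DecidablePred (Win c) := fun i => by
  unfold Win; infer_instance

lemma exists_iff_not_win {n : ℕ} (c : ZMod n → F) (i : ZMod n) :
    (∃ j : ℕ, j < 3 ∧ c (i + (j : ZMod n)) ≠ 0) ↔ ¬ Win c i := by
  unfold Win
  constructor
  · rintro ⟨j, hj, hne⟩ ⟨h0, h1, h2⟩
    interval_cases j <;> simp_all
  · intro h
    by_contra hne
    push_neg at hne
    exact h ⟨by simpa using hne 0 (by norm_num),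
             by simpa using hne 1 (by norm_num),
             by simpa using hne 2 (by norm_num)⟩

lemma wtb_eq {n : ℕ} [NeZero n] (c : ZMod n → F) :
    wtb 3 c = n - (univ.filter fun i => Win c i).card := by
  classical
  unfold wtb
  rw [Nat.card_eq_fintype_card, Fintype.card_subtype]
  have h : (univ.filter fun i : ZMod n => ∃ j : ℕ, j < 3 ∧ c (i + (j : ZMod n)) ≠ 0)
      = (univ.filter fun i => Win c i)ᶜ := by
    ext i
    simp only [Finset.mem_filter, Finset.mem_univ, true_and, Finset.mem_compl, not_not]
    exact exists_iff_not_win c i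
  rw [h, Finset.card_compl, ZMod.card]

lemma wtb_zero {n : ℕ} [NeZero n] : wtb 3 (0 : ZMod n → F) = 0 := by
  rw [wtb_eq]
  have h : (univ.filter fun i => Win (0 : ZMod n → F) i) = univ := by
    ext i; simp [Win]
  rw [h, card_univ, ZMod.card, Nat.sub_self]

lemma wtb_no_win {n : ℕ} [NeZero n] {x : ZMod n → F} (h : ∀ i, ¬ Win x i) :
    wtb 3 x = n := by
  rw [wtb_eq]
  have h' : (univ.filter fun i => Win x i) = ∅ := by
    ext i; simp [h i]
  rw [h', Finset.card_empty, Nat.sub_zero]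

lemma hn_eq {n : ℕ} [NeZero n] (x : ZMod n → F) :
    hammingNorm x + (univ.filter fun i => x i = 0).card = n := by
  classical
  have h := Finset.card_filter_add_card_filter_not
    (s := (univ : Finset (ZMod n))) (p := fun i => x i ≠ 0)
  simp only [not_not] at h
  have h2 : hammingNorm x = (univ.filter fun i => x i ≠ 0).card := rfl
  rw [h2, h, Finset.card_univ, ZMod.card]

variable {d : ℕ} {C : Submodule F (ZMod (d + 3) → F)}

lemma four_zero (hd : 3 ≤ d) [NeZero (d + 3)]
    (hmin : ∀ c ∈ C, c ≠ 0 → d ≤ hammingNorm c)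
    {x : ZMod (d + 3) → F} (hx : x ∈ C) (hx0 : x ≠ 0) (i : ZMod (d + 3))
    (h0 : x i = 0) (h1 : x (i + 1) = 0) (h2 : x (i + 2) = 0) (h3 : x (i + 3) = 0) :
    False := by
  classical
  have h6 : 6 ≤ d + 3 := by omega
  have e01 : i ≠ i + 1 := by simpa using shift_ne h6 i (a := 0) (b := 1) (by norm_num) (by norm_num)
  have e02 : i ≠ i + 2 := by simpa using shift_ne h6 i (a := 0) (b := 2) (by norm_num) (by norm_num)
  have e03 : i ≠ i + 3 := by simpa using shift_ne h6 i (a := 0) (b := 3) (by norm_num) (by norm_num)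
  have e12 : i + 1 ≠ i + 2 := by
    simpa using shift_ne h6 i (a := 1) (b := 2) (by norm_num) (by norm_num)
  have e13 : i + 1 ≠ i + 3 := by
    simpa using shift_ne h6 i (a := 1) (b := 3) (by norm_num) (by norm_num)
  have e23 : i + 2 ≠ i + 3 := by
    simpa using shift_ne h6 i (a := 2) (b := 3) (by norm_num) (by norm_num)
  have hT : ({i, i + 1, i + 2, i + 3} : Finset (ZMod (d + 3)))
      ⊆ univ.filter fun j => x j = 0 := by
    intro j hj
    simp only [Finset.mem_insert, Finset.mem_singleton] at hj
    rcases hj with rfl | rfl | rfl | rfl <;> simp [h0, h1, h2, h3]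
  have hTcard : ({i, i + 1, i + 2, i + 3} : Finset (ZMod (d + 3))).card = 4 := by
    rw [Finset.card_insert_of_notMem (by simp [e01, e02, e03]),
      Finset.card_insert_of_notMem (by simp [e12, e13]),
      Finset.card_insert_of_notMem (by simp [e23]), Finset.card_singleton]
  have hz4 : 4 ≤ (univ.filter fun j => x j = 0).card := hTcard ▸ Finset.card_le_card hT
  have hnorm := hn_eq (F := F) x
  have hmin' := hmin x hx hx0
  omega

lemma win_unique (hd : 3 ≤ d) [NeZero (d + 3)]
    (hmin : ∀ c ∈ C, c ≠ 0 → d ≤ hammingNorm c)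
    {x : ZMod (d + 3) → F} (hx : x ∈ C) (hx0 : x ≠ 0)
    {i i' : ZMod (d + 3)} (h : Win x i) (h' : Win x i') : i = i' := by
  classical
  have h6 : 6 ≤ d + 3 := by omega
  obtain ⟨h0, h1, h2⟩ := h
  obtain ⟨h0', h1', h2'⟩ := h'
  have hnorm := hn_eq (F := F) x
  have hmin' := hmin x hx hx0
  have hZ3 : (univ.filter fun j => x j = 0).card ≤ 3 := by omega
  have e01 : i ≠ i + 1 := by simpa using shift_ne h6 i (a := 0) (b := 1) (by norm_num) (by norm_num)
  have e02 : i ≠ i + 2 := by simpa using shift_ne h6 i (a := 0) (b := 2) (by norm_num) (by norm_num)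
  have e12 : i + 1 ≠ i + 2 := by
    simpa using shift_ne h6 i (a := 1) (b := 2) (by norm_num) (by norm_num)
  have hTsub : ({i, i + 1, i + 2} : Finset (ZMod (d + 3))) ⊆ univ.filter fun j => x j = 0 := by
    intro j hj
    simp only [Finset.mem_insert, Finset.mem_singleton] at hj
    rcases hj with rfl | rfl | rfl <;> simp [h0, h1, h2]
  have hTcard : ({i, i + 1, i + 2} : Finset (ZMod (d + 3))).card = 3 := by
    rw [Finset.card_insert_of_notMem (by simp [e01, e02]),
      Finset.card_insert_of_notMem (by simp [e12]), Finset.card_singleton]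
  have hTeq : ({i, i + 1, i + 2} : Finset (ZMod (d + 3))) = univ.filter fun j => x j = 0 :=
    Finset.eq_of_subset_of_card_le hTsub (by omega)
  have hi' : i' ∈ ({i, i + 1, i + 2} : Finset (ZMod (d + 3))) := by
    rw [hTeq]; simp [h0']
  have hi3 : ∀ x3 : x (i + 3) = 0, False := by
    intro x3
    have : i + 3 ∈ ({i, i + 1, i + 2} : Finset (ZMod (d + 3))) := by
      rw [hTeq]; simp [x3]
    simp only [Finset.mem_insert, Finset.mem_singleton] at this
    rcases this with h | h | h
    · exact shift_ne h6 i (a := 0) (b := 3) (by norm_num) (by norm_num) (by simpa using h.symm)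
    · exact shift_ne h6 i (a := 1) (b := 3) (by norm_num) (by norm_num) (by simpa using h.symm)
    · exact shift_ne h6 i (a := 2) (b := 3) (by norm_num) (by norm_num) (by simpa using h.symm)
  simp only [Finset.mem_insert, Finset.mem_singleton] at hi'
  rcases hi' with rfl | rfl | rfl
  · rfl
  · exact absurd (by rw [show i + 1 + 2 = i + 3 by ring] at h2'; exact h2') (fun h => hi3 h)
  · exact absurd (by rw [show i + 2 + 1 = i + 3 by ring] at h1'; exact h1') (fun h => hi3 h)

lemma wtb_of_win (hd : 3 ≤ d) [NeZero (d + 3)]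
    (hmin : ∀ c ∈ C, c ≠ 0 → d ≤ hammingNorm c)
    {x : ZMod (d + 3) → F} (hx : x ∈ C) (hx0 : x ≠ 0)
    {i : ZMod (d + 3)} (h : Win x i) : wtb 3 x = d + 2 := by
  rw [wtb_eq]
  have hfil : (univ.filter fun j => Win x j) = {i} := by
    ext j
    simp only [Finset.mem_filter, Finset.mem_univ, true_and, Finset.mem_singleton]
    exact ⟨fun hj => win_unique hd hmin hx hx0 hj h, fun hj => hj ▸ h⟩
  rw [hfil, Finset.card_singleton]
  omega

end MDSAux

set_option linter.unusedSectionVars false in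
set_option maxHeartbeats 1000000 in
set_option synthInstance.maxHeartbeats 200000 in
open MDSAux Finset in
/-- The full `3`-weight distribution of a `[d+3, 4, d]` MDS code over `F_q` with
`d ≥ 3`:  `A^3(0) = 1`, `A^3(w) = 0` for `1 ≤ w ≤ d+1`, `A^3(d+2) = (d+3)(q-1)`,
`A^3(d+3) = q^4 - (d+3)q + d + 2`; these values sum to `q^4`. -/
theorem mds_three_weight_distribution
    {F : Type*} [Field F] [Fintype F] [DecidableEq F]
    (d : ℕ) (hd : 3 ≤ d) [NeZero (d + 3)]
    (C : Submodule F (ZMod (d + 3) → F))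
    (hk : Module.finrank F C = 4)
    (hmin : ∀ c ∈ C, c ≠ 0 → d ≤ hammingNorm c)
    (hex : ∃ c ∈ C, c ≠ 0 ∧ hammingNorm c = d) :
    Nat.card {c : C // wtb 3 (c : ZMod (d + 3) → F) = 0} = 1 ∧
    (∀ w, 1 ≤ w → w ≤ d + 1 →
      Nat.card {c : C // wtb 3 (c : ZMod (d + 3) → F) = w} = 0) ∧
    Nat.card {c : C // wtb 3 (c : ZMod (d + 3) → F) = d + 2} =
      (d + 3) * (Fintype.card F - 1) ∧
    (Nat.card {c : C // wtb 3 (c : ZMod (d + 3) → F) = d + 3} : ℤ) =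
      (Fintype.card F : ℤ) ^ 4 - (d + 3) * (Fintype.card F : ℤ) + d + 2 ∧
    (1 : ℤ) + (d + 3) * ((Fintype.card F : ℤ) - 1) +
        ((Fintype.card F : ℤ) ^ 4 - (d + 3) * (Fintype.card F : ℤ) + d + 2) =
      (Fintype.card F : ℤ) ^ 4 := by
  classical
  have h6 : 6 ≤ d + 3 := by omega
  haveI : Fintype C := Fintype.ofFinite C
  set q := Fintype.card F with hqdef
  have hq2 : 2 ≤ q := Fintype.one_lt_card
  have hcardC : Fintype.card C = q ^ 4 := by
    rw [Module.card_eq_pow_finrank (K := F) (V := C), hk]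
  -- trichotomy
  have tri : ∀ c : C, (c = 0 ∧ wtb 3 (c : ZMod (d + 3) → F) = 0) ∨
      ((c : ZMod (d + 3) → F) ≠ 0 ∧
        (wtb 3 (c : ZMod (d + 3) → F) = d + 2 ∨ wtb 3 (c : ZMod (d + 3) → F) = d + 3)) := by
    intro c
    by_cases h0 : (c : ZMod (d + 3) → F) = 0
    · left
      refine ⟨by simpa [ZeroMemClass.coe_eq_zero] using h0, ?_⟩
      rw [h0, wtb_zero]
    · right
      refine ⟨h0, ?_⟩
      by_cases hw : ∃ i, Win (c : ZMod (d + 3) → F) i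
      · obtain ⟨i, hi⟩ := hw
        exact Or.inl (wtb_of_win hd hmin c.2 h0 hi)
      · push_neg at hw
        exact Or.inr (wtb_no_win hw)
  -- Part 1
  have part1 : Nat.card {c : C // wtb 3 (c : ZMod (d + 3) → F) = 0} = 1 := by
    rw [Nat.card_eq_one_iff_unique]
    constructor
    · constructor
      rintro ⟨c, hc⟩ ⟨c', hc'⟩
      have hcz : c = 0 := by
        rcases tri c with ⟨h, _⟩ | ⟨_, h | h⟩ <;> first | exact h | omega
      have hcz' : c' = 0 := by
        rcases tri c' with ⟨h, _⟩ | ⟨_, h | h⟩ <;> first | exact h | omega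
      exact Subtype.ext (hcz.trans hcz'.symm)
    · exact ⟨⟨0, by simpa using wtb_zero (F := F) (n := d + 3)⟩⟩
  -- Part 2
  have part2 : ∀ w, 1 ≤ w → w ≤ d + 1 →
      Nat.card {c : C // wtb 3 (c : ZMod (d + 3) → F) = w} = 0 := by
    intro w h1 h2
    have : IsEmpty {c : C // wtb 3 (c : ZMod (d + 3) → F) = w} := by
      constructor
      rintro ⟨c, hc⟩
      rcases tri c with ⟨_, h⟩ | ⟨_, h | h⟩ <;> omega
    exact Nat.card_of_isEmpty
  -- count of each window subcode
  have subcount : ∀ i : ZMod (d + 3),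
      (univ.filter fun c : C => Win (c : ZMod (d + 3) → F) i).card = q := by
    intro i
    set φ : C →ₗ[F] (Fin 3 → F) :=
      LinearMap.pi fun j : Fin 3 =>
        (LinearMap.proj (i + ((j : ℕ) : ZMod (d + 3)))).comp C.subtype with hφdef
    have hφ : ∀ (c : C) (j : Fin 3),
        φ c j = (c : ZMod (d + 3) → F) (i + ((j : ℕ) : ZMod (d + 3))) := fun c j => rfl
    have hker : ∀ c : C, c ∈ LinearMap.ker φ ↔ Win (c : ZMod (d + 3) → F) i := by
      intro c
      rw [LinearMap.mem_ker]
      constructor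
      · intro h
        rw [funext_iff] at h
        refine ⟨?_, ?_, ?_⟩
        · have h0 := (hφ c 0) ▸ h 0
          simpa using h0
        · have h1 := (hφ c 1) ▸ h 1
          simpa using h1
        · have h2 := (hφ c 2) ▸ h 2
          simpa using h2
      · rintro ⟨h0, h1, h2⟩
        funext j
        rw [hφ]
        fin_cases j
        · simpa using h0
        · simpa using h1
        · simpa using h2
    haveI : Fintype (LinearMap.ker φ) := Fintype.ofFinite _
    have hrange : Module.finrank F (LinearMap.range φ) ≤ 3 := by
      have h := Submodule.finrank_le (LinearMap.range φ)
      rwa [Module.finrank_fin_fun] at h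
    have hrk := LinearMap.finrank_range_add_finrank_ker φ
    rw [hk] at hrk
    have hker1 : 1 ≤ Module.finrank F (LinearMap.ker φ) := by omega
    have hcardker : Nat.card (LinearMap.ker φ) = q ^ Module.finrank F (LinearMap.ker φ) := by
      rw [Nat.card_eq_fintype_card]
      exact Module.card_eq_pow_finrank (K := F) (V := LinearMap.ker φ)
    have hinj : Function.Injective
        (fun c : LinearMap.ker φ => ((c : C) : ZMod (d + 3) → F) (i + 3)) := by
      rintro ⟨c, hc⟩ ⟨c', hc'⟩ hcc
      rw [hker] at hc hc'
      obtain ⟨hc0, hc1, hc2⟩ := hc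
      obtain ⟨hc0', hc1', hc2'⟩ := hc'
      simp only at hcc
      ext1
      by_contra hne
      have hsub0 : (c : C) - c' ≠ 0 := sub_ne_zero.mpr hne
      have hsubf : ((c - c' : C) : ZMod (d + 3) → F) ≠ 0 :=
        fun h => hsub0 (ZeroMemClass.coe_eq_zero.mp h)
      refine four_zero hd hmin (c - c' : C).2 hsubf i ?_ ?_ ?_ ?_
      · simp [Submodule.coe_sub, hc0, hc0']
      · simp [Submodule.coe_sub, hc1, hc1']
      · simp [Submodule.coe_sub, hc2, hc2']
      · simp [Submodule.coe_sub, hcc]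
    have hup : Nat.card (LinearMap.ker φ) ≤ q := by
      have h := Nat.card_le_card_of_injective _ hinj
      simpa [Nat.card_eq_fintype_card] using h
    have hlow : q ≤ Nat.card (LinearMap.ker φ) := by
      rw [hcardker]
      calc q = q ^ 1 := (pow_one q).symm
        _ ≤ q ^ Module.finrank F (LinearMap.ker φ) := Nat.pow_le_pow_right (by omega) hker1
    have hkq : Nat.card (LinearMap.ker φ) = q := le_antisymm hup hlow
    have hNi : (univ.filter fun c : C => Win (c : ZMod (d + 3) → F) i).card
        = Nat.card {c : C // Win (c : ZMod (d + 3) → F) i} := by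
      rw [Nat.card_eq_fintype_card, Fintype.card_subtype]
    rw [hNi, Nat.card_congr (Equiv.subtypeEquivRight fun c => (hker c).symm), hkq]
  -- nonzero window subcode counts
  have hBi : ∀ i : ZMod (d + 3),
      (univ.filter fun c : C => Win (c : ZMod (d + 3) → F) i ∧ c ≠ 0).card = q - 1 := by
    intro i
    have he : (univ.filter fun c : C => Win (c : ZMod (d + 3) → F) i ∧ c ≠ 0)
        = (univ.filter fun c : C => Win (c : ZMod (d + 3) → F) i).erase 0 := by
      ext c
      simp only [Finset.mem_filter, Finset.mem_univ, true_and, Finset.mem_erase]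
      tauto
    have h0mem : (0 : C) ∈ univ.filter fun c : C => Win (c : ZMod (d + 3) → F) i := by
      rw [Finset.mem_filter]; exact ⟨Finset.mem_univ _, by simp [Win]⟩
    rw [he, Finset.card_erase_of_mem h0mem, subcount i]
  -- Part 3
  have part3' : (univ.filter fun c : C => wtb 3 (c : ZMod (d + 3) → F) = d + 2).card
      = (d + 3) * (q - 1) := by
    have hU : (univ.filter fun c : C => wtb 3 (c : ZMod (d + 3) → F) = d + 2)
        = univ.biUnion (fun i : ZMod (d + 3) =>
            univ.filter fun c : C => Win (c : ZMod (d + 3) → F) i ∧ c ≠ 0) := by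
      ext c
      simp only [Finset.mem_filter, Finset.mem_univ, true_and, Finset.mem_biUnion]
      constructor
      · intro hc
        have hc0 : (c : ZMod (d + 3) → F) ≠ 0 := by
          rcases tri c with ⟨_, h⟩ | ⟨h, _⟩
          · omega
          · exact h
        have hwin : ∃ i, Win (c : ZMod (d + 3) → F) i := by
          by_contra hw
          push_neg at hw
          have := wtb_no_win hw
          omega
        obtain ⟨i, hi⟩ := hwin
        exact ⟨i, hi, fun h => hc0 (by simp [h])⟩
      · rintro ⟨i, hi, hc0⟩
        have hc0' : (c : ZMod (d + 3) → F) ≠ 0 := by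
          simpa [ZeroMemClass.coe_eq_zero] using hc0
        exact wtb_of_win hd hmin c.2 hc0' hi
    rw [hU, Finset.card_biUnion]
    · have hsum : ∑ i : ZMod (d + 3),
          (univ.filter fun c : C => Win (c : ZMod (d + 3) → F) i ∧ c ≠ 0).card
          = ∑ _i : ZMod (d + 3), (q - 1) := Finset.sum_congr rfl fun i _ => hBi i
      rw [hsum, Finset.sum_const, card_univ, ZMod.card, smul_eq_mul]
    · intro i _ j _ hij
      rw [Function.onFun, Finset.disjoint_left]
      intro c hc hc'
      simp only [Finset.mem_filter, Finset.mem_univ, true_and] at hc hc'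
      have hc0 : (c : ZMod (d + 3) → F) ≠ 0 := by
        simpa [ZeroMemClass.coe_eq_zero] using hc.2
      exact hij (win_unique hd hmin c.2 hc0 hc.1 hc'.1)
  have part3 : Nat.card {c : C // wtb 3 (c : ZMod (d + 3) → F) = d + 2} = (d + 3) * (q - 1) := by
    rw [Nat.card_eq_fintype_card, Fintype.card_subtype, part3']
  -- total count and Part 4
  set S0 : Finset C := univ.filter fun c : C => wtb 3 (c : ZMod (d + 3) → F) = 0 with hS0
  set S2 : Finset C := univ.filter fun c : C => wtb 3 (c : ZMod (d + 3) → F) = d + 2 with hS2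
  set S3 : Finset C := univ.filter fun c : C => wtb 3 (c : ZMod (d + 3) → F) = d + 3 with hS3
  have hS0card : S0.card = 1 := by
    have : S0 = {(0 : C)} := by
      ext c
      simp only [hS0, Finset.mem_filter, Finset.mem_univ, true_and, Finset.mem_singleton]
      constructor
      · intro h
        rcases tri c with ⟨h', _⟩ | ⟨_, h' | h'⟩ <;> first | exact h' | omega
      · rintro rfl
        simpa using wtb_zero (F := F) (n := d + 3)
    rw [this, Finset.card_singleton]
  have hcover : (univ : Finset C) = (S0 ∪ S2) ∪ S3 := by
    ext c
    simp only [Finset.mem_univ, true_iff, Finset.mem_union, hS0, hS2, hS3, Finset.mem_filter,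
      Finset.mem_univ, true_and]
    rcases tri c with ⟨_, h⟩ | ⟨_, h | h⟩ <;> tauto
  have hd02 : Disjoint S0 S2 := by
    rw [Finset.disjoint_left]
    intro c hc hc'
    simp only [hS0, hS2, Finset.mem_filter] at hc hc'
    omega
  have hd023 : Disjoint (S0 ∪ S2) S3 := by
    rw [Finset.disjoint_left]
    intro c hc hc'
    simp only [hS0, hS2, hS3, Finset.mem_union, Finset.mem_filter] at hc hc'
    omega
  have htot : 1 + (d + 3) * (q - 1) + S3.card = q ^ 4 := by
    have h := hcardC
    rw [← Finset.card_univ, hcover, Finset.card_union_of_disjoint hd023,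
      Finset.card_union_of_disjoint hd02, hS0card] at h
    rw [← h, part3']
  have hfil3 : Nat.card {c : C // wtb 3 (c : ZMod (d + 3) → F) = d + 3} = S3.card := by
    rw [Nat.card_eq_fintype_card, Fintype.card_subtype]
  have hq1 : 1 ≤ q := by omega
  have part4 : (Nat.card {c : C // wtb 3 (c : ZMod (d + 3) → F) = d + 3} : ℤ)
      = (q : ℤ) ^ 4 - (d + 3) * (q : ℤ) + d + 2 := by
    rw [hfil3]
    have h := congrArg (fun m : ℕ => (m : ℤ)) htot
    push_cast [Nat.cast_sub hq1] at h
    linarith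
  exact ⟨part1, part2, part3, part4, by ring⟩
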